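/- arXiv:math/0210234 — 2 statements merged into one kernel-verified Lean document; each statement's English description precedes it below -/
import Mathlib

section
/- Let b(c) = 4π( 4c + 2c² log((c−1)/(c+1)) + (16/3)·c/(c²−1) ), defined for real c with |c| > 1. Then b is strictly decreasing on (−∞,−1) and strictly decreasing on (1,+∞); moreover lim_{c→1⁺} b(c) = +∞, lim_{c→−1⁻} b(c) = −∞, and lim_{|c|→∞} b(c) = 0. -/
open Filter

noncomputable section

/-- The strength `b(c)` of the Dirac-delta external force corresponding to the
stationary Landau/Tian–Xin solutions:
`b(c) = 4π( 4c + 2c² log((c−1)/(c+1)) + (16/3)·c/(c²−1) )`. -/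
def bconst (c : ℝ) : ℝ :=
  4 * Real.pi *
    (4 * c + 2 * c ^ 2 * Real.log ((c - 1) / (c + 1)) + (16 / 3) * (c / (c ^ 2 - 1)))

open Real Set

lemma hasDerivAt_logr (x : ℝ) (hx0 : -1 < x) (hx1 : x < 1) :
    HasDerivAt (fun t : ℝ => Real.log (1 + t) - Real.log (1 - t))
      (1/(1+x) + 1/(1-x)) x := by
  have h1 : 1 + x ≠ 0 := by intro h; nlinarith
  have h2 : 1 - x ≠ 0 := by intro h; nlinarith
  have d1 : HasDerivAt (fun t : ℝ => Real.log (1 + t)) (1/(1+x)) x := by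
    simpa using (((hasDerivAt_id' (𝕜 := ℝ) (x := x)).const_add 1).log h1)
  have d2 : HasDerivAt (fun t : ℝ => Real.log (1 - t)) (-1/(1-x)) x := by
    simpa using (((hasDerivAt_id' (𝕜 := ℝ) (x := x)).const_sub 1).log h2)
  refine (d1.sub d2).congr_deriv ?_
  ring

lemma artanh_lower {t : ℝ} (h0 : 0 ≤ t) (h1 : t < 1) :
    2*t + 2*t^3/3 ≤ Real.log (1 + t) - Real.log (1 - t) := by
  set g : ℝ → ℝ := fun x => Real.log (1 + x) - Real.log (1 - x) - (2*x + 2*x^3/3) with hg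
  have key : ∀ x ∈ Set.Ico (0:ℝ) 1,
      HasDerivAt g (1/(1+x) + 1/(1-x) - (2 + 2*x^2)) x := by
    intro x hx
    have hd : HasDerivAt (fun x : ℝ => 2*x + 2*x^3/3) (2 + 2*x^2) x := by
      have := ((hasDerivAt_id' (𝕜 := ℝ) (x := x)).const_mul 2).add
        (((hasDerivAt_pow 3 x).const_mul 2).div_const 3)
      refine this.congr_deriv ?_
      push_cast; ring
    exact (hasDerivAt_logr x (by linarith [hx.1]) hx.2).sub hd
  have mono : MonotoneOn g (Set.Ico (0:ℝ) 1) := by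
    apply monotoneOn_of_deriv_nonneg (convex_Ico 0 1)
    · intro x hx
      exact (key x hx).continuousAt.continuousWithinAt
    · intro x hx
      rw [interior_Ico] at hx
      exact (key x (Set.Ioo_subset_Ico_self hx)).differentiableAt.differentiableWithinAt
    · intro x hx
      rw [interior_Ico] at hx
      rw [(key x (Set.Ioo_subset_Ico_self hx)).deriv]
      have hx0 := hx.1
      have hx1 := hx.2
      have ha : (0:ℝ) < 1 + x := by linarith
      have hb : (0:ℝ) < 1 - x := by linarith
      have : 1/(1+x) + 1/(1-x) - (2 + 2*x^2) = 2*x^4/((1+x)*(1-x)) := by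
        field_simp
        ring
      rw [this]
      positivity
  have h := mono (Set.left_mem_Ico.2 one_pos) ⟨h0, h1⟩ h0
  simp only [hg] at h
  norm_num at h
  linarith [h]

lemma artanh_upper {t : ℝ} (h0 : 0 ≤ t) (h1 : t < 1) :
    Real.log (1 + t) - Real.log (1 - t) ≤ 2*t + 2*t^3/(3*(1-t^2)) := by
  set g : ℝ → ℝ := fun x => 2*x + 2*x^3/(3*(1-x^2)) - (Real.log (1 + x) - Real.log (1 - x))
    with hg
  have key : ∀ x ∈ Set.Ico (0:ℝ) 1,
      HasDerivAt g (4*x^4/(3*(1-x^2)^2)) x := by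
    intro x hx
    have hx0 := hx.1
    have hx1 := hx.2
    have hne : 3*(1-x^2) ≠ 0 := by
      have : 0 < 1 - x^2 := by nlinarith
      positivity
    have hd : HasDerivAt (fun x : ℝ => 2*x + 2*x^3/(3*(1-x^2)))
        ((2*(3*x^2) * (3*(1-x^2)) - 2*x^3 * (3*(-(2*x)))) / (3*(1-x^2))^2 + 2) x := by
      have hnum : HasDerivAt (fun x : ℝ => 2*x^3) (2*(3*x^2)) x := by
        have := (hasDerivAt_pow 3 x).const_mul 2
        refine this.congr_deriv ?_
        try push_cast
        try ring
      have hden : HasDerivAt (fun x : ℝ => 3*(1-x^2)) (3*(-(2*x))) x := by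
        have := ((hasDerivAt_pow 2 x).const_sub 1).const_mul 3
        refine this.congr_deriv ?_
        try push_cast
        try ring
      have := ((hasDerivAt_id' (𝕜 := ℝ) (x := x)).const_mul 2).add (hnum.div hden hne)
      refine this.congr_deriv ?_
      ring
    have := hd.sub (hasDerivAt_logr x (by linarith) hx1)
    refine this.congr_deriv ?_
    have ha : (1:ℝ) + x ≠ 0 := by intro h; nlinarith
    have hb : (1:ℝ) - x ≠ 0 := by intro h; nlinarith
    have h1x : (1:ℝ) - x^2 ≠ 0 := by intro h; nlinarith
    field_simp
    ring
  have mono : MonotoneOn g (Set.Ico (0:ℝ) 1) := by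
    apply monotoneOn_of_deriv_nonneg (convex_Ico 0 1)
    · intro x hx
      exact (key x hx).continuousAt.continuousWithinAt
    · intro x hx
      rw [interior_Ico] at hx
      exact (key x (Set.Ioo_subset_Ico_self hx)).differentiableAt.differentiableWithinAt
    · intro x hx
      rw [interior_Ico] at hx
      rw [(key x (Set.Ioo_subset_Ico_self hx)).deriv]
      have hx0 := hx.1
      have hx1 := hx.2
      have : (0:ℝ) < 1 - x^2 := by nlinarith
      positivity
  have h := mono (Set.left_mem_Ico.2 one_pos) ⟨h0, h1⟩ h0
  simp only [hg] at h
  norm_num at h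
  linarith [h]

lemma log_ratio_eq {c : ℝ} (hc : 1 < c) :
    Real.log ((c-1)/(c+1)) = -(Real.log (1 + 1/c) - Real.log (1 - 1/c)) := by
  have hc0 : (0:ℝ) < c := by linarith
  have h1 : 1 + 1/c = (c+1)/c := by field_simp
  have h2 : 1 - 1/c = (c-1)/c := by field_simp
  have hcm : c - 1 ≠ 0 := by intro h; nlinarith
  have hcp : c + 1 ≠ 0 := by intro h; nlinarith
  rw [h1, h2, Real.log_div hcp (ne_of_gt hc0), Real.log_div hcm (ne_of_gt hc0),
    Real.log_div hcm hcp]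
  ring

lemma logA_c {c : ℝ} (hc : 1 < c) :
    Real.log ((c-1)/(c+1)) ≤ -2/c - 2/(3*c^3) := by
  have hc0 : (0:ℝ) < c := by linarith
  have ht0 : (0:ℝ) ≤ 1/c := by positivity
  have ht1 : 1/c < 1 := by
    rw [div_lt_one hc0]; linarith
  have h := artanh_lower ht0 ht1
  rw [log_ratio_eq hc]
  have heq : 2*(1/c) + 2*(1/c)^3/3 = 2/c + 2/(3*c^3) := by
    field_simp
  have e1 : -2/c = -(2/c) := by ring
  have e2 : -2/(3*c^3) = -(2/(3*c^3)) := by ring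
  linarith [h, heq]

lemma logB_c {c : ℝ} (hc : 1 < c) :
    -2/c - 2/(3*c*(c^2-1)) ≤ Real.log ((c-1)/(c+1)) := by
  have hc0 : (0:ℝ) < c := by linarith
  have hc2 : (0:ℝ) < c^2 - 1 := by nlinarith
  have ht0 : (0:ℝ) ≤ 1/c := by positivity
  have ht1 : 1/c < 1 := by
    rw [div_lt_one hc0]; linarith
  have h := artanh_upper ht0 ht1
  rw [log_ratio_eq hc]
  have heq : 2*(1/c) + 2*(1/c)^3/(3*(1-(1/c)^2)) = 2/c + 2/(3*c*(c^2-1)) := by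
    rw [show 1 - (1/c)^2 = (c^2-1)/c^2 by field_simp]
    field_simp
  have e1 : -2/c = -(2/c) := by ring
  linarith [h, heq]

lemma bconst_neg (c : ℝ) : bconst (-c) = -bconst c := by
  unfold bconst
  have h1 : (-c - 1)/(-c + 1) = ((c-1)/(c+1))⁻¹ := by
    rw [inv_div, show (-c - 1) = -(c+1) by ring, show (-c + 1) = -(c-1) by ring,
      neg_div_neg_eq]
  rw [h1, Real.log_inv]
  ring

lemma hasDerivAt_bconst {c : ℝ} (hc : 1 < c) :
    HasDerivAt bconst
      (4*Real.pi*(4 + 4*c*Real.log ((c-1)/(c+1)) + 4*c^2/(c^2-1)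
        - 16/3*((c^2+1)/(c^2-1)^2))) c := by
  have hc0 : (0:ℝ) < c := by linarith
  have hm : c - 1 ≠ 0 := by intro h; nlinarith
  have hp : c + 1 ≠ 0 := by intro h; nlinarith
  have hq : (c-1)/(c+1) ≠ 0 := div_ne_zero hm hp
  have h2 : (0:ℝ) < c^2 - 1 := by nlinarith
  have hden : c^2 - 1 ≠ 0 := ne_of_gt h2
  have hr : HasDerivAt (fun x : ℝ => (x-1)/(x+1))
      ((1*(c+1) - (c-1)*1)/(c+1)^2) c :=
    ((hasDerivAt_id' (𝕜 := ℝ) (x := c)).sub_const 1).div ((hasDerivAt_id' (𝕜 := ℝ) (x := c)).add_const 1) hp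
  have hlog := hr.log hq
  have hterm2 : HasDerivAt (fun x : ℝ => 2*x^2 * Real.log ((x-1)/(x+1)))
      (2*(2*c) * Real.log ((c-1)/(c+1))
        + 2*c^2 * (((1*(c+1) - (c-1)*1)/(c+1)^2) / ((c-1)/(c+1)))) c := by
    have hsq : HasDerivAt (fun x : ℝ => 2*x^2) (2*(2*c)) c := by
      have := (hasDerivAt_pow 2 c).const_mul 2
      refine this.congr_deriv ?_
      push_cast; ring
    exact hsq.mul hlog
  have hterm3 : HasDerivAt (fun x : ℝ => (16:ℝ)/3 * (x/(x^2-1)))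
      ((16:ℝ)/3 * ((1*(c^2-1) - c*(2*c)) / (c^2-1)^2)) c := by
    have hdiv : HasDerivAt (fun x : ℝ => x/(x^2-1))
        ((1*(c^2-1) - c*(2*c)) / (c^2-1)^2) c := by
      have := (hasDerivAt_id' (𝕜 := ℝ) (x := c)).div ((hasDerivAt_pow 2 c).sub_const 1) hden
      refine this.congr_deriv ?_
      push_cast
      norm_num
    exact hdiv.const_mul _
  have h4 : HasDerivAt (fun x : ℝ => 4*x) (4:ℝ) c := by
    simpa using (hasDerivAt_id' (𝕜 := ℝ) (x := c)).const_mul 4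
  have hall := (((h4.add hterm2).add hterm3).const_mul (4*Real.pi))
  have heq : bconst = fun x : ℝ =>
      4*Real.pi * (4*x + 2*x^2 * Real.log ((x-1)/(x+1)) + (16:ℝ)/3 * (x/(x^2-1))) := by
    funext x; rfl
  rw [heq]
  refine hall.congr_deriv ?_
  field_simp
  ring

lemma deriv_bconst_neg {c : ℝ} (hc : 1 < c) :
    4*Real.pi*(4 + 4*c*Real.log ((c-1)/(c+1)) + 4*c^2/(c^2-1)
      - 16/3*((c^2+1)/(c^2-1)^2)) < 0 := by
  have hc0 : (0:ℝ) < c := by linarith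
  have h2 : (0:ℝ) < c^2 - 1 := by nlinarith
  have hL := logA_c hc
  have hmul : 4*c*Real.log ((c-1)/(c+1)) ≤ 4*c*(-2/c - 2/(3*c^3)) :=
    mul_le_mul_of_nonneg_left hL (by positivity)
  have keyeq : 4 + 4*c*(-2/c - 2/(3*c^3)) + 4*c^2/(c^2-1) - 16/3*((c^2+1)/(c^2-1)^2)
      = (-12*c^4 - 12*c^2 - 8)/(3*c^2*(c^2-1)^2) := by
    field_simp
    ring
  have hneg : (-12*c^4 - 12*c^2 - 8)/(3*c^2*(c^2-1)^2) < 0 := by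
    apply div_neg_of_neg_of_pos
    · nlinarith
    · positivity
  have hbr : 4 + 4*c*Real.log ((c-1)/(c+1)) + 4*c^2/(c^2-1)
      - 16/3*((c^2+1)/(c^2-1)^2) < 0 := by
    linarith [hmul, keyeq, hneg]
  have hpi : (0:ℝ) < 4*Real.pi := by positivity
  exact mul_neg_of_pos_of_neg hpi hbr

lemma bconst_anti : StrictAntiOn bconst (Set.Ioi (1:ℝ)) := by
  apply strictAntiOn_of_deriv_neg (convex_Ioi 1)
  · intro x hx
    exact (hasDerivAt_bconst hx).continuousAt.continuousWithinAt
  · intro x hx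
    rw [interior_Ioi] at hx
    rw [(hasDerivAt_bconst hx).deriv]
    exact deriv_bconst_neg hx

lemma bconst_lower {c : ℝ} (hc : 1 < c) :
    4*Real.pi*(4*c/(c^2-1)) ≤ bconst c := by
  have hc0 : (0:ℝ) < c := by linarith
  have h2 : (0:ℝ) < c^2 - 1 := by nlinarith
  have hL := logB_c hc
  have hmul : 2*c^2*(-2/c - 2/(3*c*(c^2-1))) ≤ 2*c^2*Real.log ((c-1)/(c+1)) :=
    mul_le_mul_of_nonneg_left hL (by positivity)
  have keyeq : 4*c + 2*c^2*(-2/c - 2/(3*c*(c^2-1))) + 16/3*(c/(c^2-1))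
      = 4*c/(c^2-1) := by
    field_simp
    ring
  unfold bconst
  have hpi : (0:ℝ) ≤ 4*Real.pi := by positivity
  apply mul_le_mul_of_nonneg_left _ hpi
  linarith [hmul, keyeq]

lemma bconst_upper {c : ℝ} (hc : 1 < c) :
    bconst c ≤ 4*Real.pi*(-4/(3*c) + 16*c/(3*(c^2-1))) := by
  have hc0 : (0:ℝ) < c := by linarith
  have h2 : (0:ℝ) < c^2 - 1 := by nlinarith
  have hL := logA_c hc
  have hmul : 2*c^2*Real.log ((c-1)/(c+1)) ≤ 2*c^2*(-2/c - 2/(3*c^3)) :=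
    mul_le_mul_of_nonneg_left hL (by positivity)
  have keyeq : 4*c + 2*c^2*(-2/c - 2/(3*c^3)) + 16/3*(c/(c^2-1))
      = -4/(3*c) + 16*c/(3*(c^2-1)) := by
    field_simp
    ring
  unfold bconst
  have hpi : (0:ℝ) ≤ 4*Real.pi := by positivity
  apply mul_le_mul_of_nonneg_left _ hpi
  linarith [hmul, keyeq]

lemma bconst_tendsto_one : Tendsto bconst (nhdsWithin 1 (Set.Ioi 1)) atTop := by
  have hsub : Tendsto (fun c : ℝ => c - 1) (nhdsWithin 1 (Set.Ioi 1))
      (nhdsWithin 0 (Set.Ioi 0)) := by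
    apply tendsto_nhdsWithin_of_tendsto_nhds_of_eventually_within
    · have hca : ContinuousAt (fun c : ℝ => c - 1) 1 := by fun_prop
      have : Tendsto (fun c : ℝ => c - 1) (nhds 1) (nhds 0) := by
        simpa using hca.tendsto
      exact this.mono_left nhdsWithin_le_nhds
    · filter_upwards [self_mem_nhdsWithin] with c hc
      simp only [Set.mem_Ioi] at hc ⊢
      linarith
  have hinv : Tendsto (fun c : ℝ => (c - 1)⁻¹) (nhdsWithin 1 (Set.Ioi 1)) atTop :=
    tendsto_inv_nhdsGT_zero.comp hsub
  have hfrac : Tendsto (fun c : ℝ => 16*Real.pi*c/(c+1)) (nhdsWithin 1 (Set.Ioi 1))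
      (nhds (8*Real.pi)) := by
    have hca : ContinuousAt (fun c : ℝ => 16*Real.pi*c/(c+1)) 1 := by
      apply ContinuousAt.div
      · fun_prop
      · fun_prop
      · norm_num
    have h := hca.tendsto.mono_left (nhdsWithin_le_nhds (s := Set.Ioi 1))
    rw [show (8:ℝ)*Real.pi = 16*Real.pi*1/(1+1) by ring]
    exact h
  have hprod := hfrac.pos_mul_atTop (by positivity) hinv
  apply tendsto_atTop_mono' _ _ hprod
  filter_upwards [self_mem_nhdsWithin] with c hc
  simp only [Set.mem_Ioi] at hc
  have hc0 : (0:ℝ) < c := by linarith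
  have h2 : (0:ℝ) < c^2 - 1 := by nlinarith
  have hm : c - 1 ≠ 0 := by intro h; nlinarith
  have hp : c + 1 ≠ 0 := by intro h; nlinarith
  have hh : c^2 - 1 ≠ 0 := ne_of_gt h2
  have : 16*Real.pi*c/(c+1) * (c-1)⁻¹ = 4*Real.pi*(4*c/(c^2-1)) := by
    field_simp
    ring
  rw [this]
  exact bconst_lower hc

lemma bconst_tendsto_top : Tendsto bconst atTop (nhds 0) := by
  have hdiff : Tendsto (fun c : ℝ => c - 1/c) atTop atTop := by
    apply tendsto_atTop_mono' atTop _ (tendsto_atTop_add_const_right _ (-1) tendsto_id)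
    filter_upwards [eventually_ge_atTop (1:ℝ)] with c hc
    have hc0 : (0:ℝ) < c := by linarith
    have : 1/c ≤ 1 := by rw [div_le_one hc0]; exact hc
    simp only [id]
    linarith
  have hlow : Tendsto (fun c : ℝ => (16*Real.pi)/(c - 1/c)) atTop (nhds 0) :=
    tendsto_const_nhds.div_atTop hdiff
  have hupA : Tendsto (fun c : ℝ => (-16*Real.pi/3)/c) atTop (nhds 0) :=
    tendsto_const_nhds.div_atTop tendsto_id
  have hupB : Tendsto (fun c : ℝ => (64*Real.pi/3)/(c - 1/c)) atTop (nhds 0) :=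
    tendsto_const_nhds.div_atTop hdiff
  have hup : Tendsto (fun c : ℝ => (-16*Real.pi/3)/c + (64*Real.pi/3)/(c - 1/c))
      atTop (nhds 0) := by
    have := hupA.add hupB
    simpa using this
  apply tendsto_of_tendsto_of_tendsto_of_le_of_le' hlow hup
  · filter_upwards [eventually_gt_atTop (1:ℝ)] with c hc
    have hc0 : (0:ℝ) < c := by linarith
    have h2 : (0:ℝ) < c^2 - 1 := by nlinarith
    have hh : c^2 - 1 ≠ 0 := ne_of_gt h2
    have : (16*Real.pi)/(c - 1/c) = 4*Real.pi*(4*c/(c^2-1)) := by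
      rw [show c - 1/c = (c^2-1)/c by field_simp]
      field_simp
      ring
    rw [this]
    exact bconst_lower hc
  · filter_upwards [eventually_gt_atTop (1:ℝ)] with c hc
    have hc0 : (0:ℝ) < c := by linarith
    have h2 : (0:ℝ) < c^2 - 1 := by nlinarith
    have hh : c^2 - 1 ≠ 0 := ne_of_gt h2
    have : (-16*Real.pi/3)/c + (64*Real.pi/3)/(c - 1/c)
        = 4*Real.pi*(-4/(3*c) + 16*c/(3*(c^2-1))) := by
      rw [show c - 1/c = (c^2-1)/c by field_simp]
      field_simp
      ring
    rw [this]
    exact bconst_upper hc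

/-- **Monotonicity and limits of `b(c)`:** `b` is strictly decreasing on `(−∞,−1)`
and on `(1,∞)`; moreover `b(c) → +∞` as `c → 1⁺`, `b(c) → −∞` as `c → −1⁻`,
and `b(c) → 0` as `c → +∞` and as `c → −∞`. -/
theorem bconst_monotone_and_limits :
    StrictAntiOn bconst (Set.Iio (-1 : ℝ)) ∧
    StrictAntiOn bconst (Set.Ioi (1 : ℝ)) ∧
    Tendsto bconst (nhdsWithin 1 (Set.Ioi 1)) atTop ∧
    Tendsto bconst (nhdsWithin (-1) (Set.Iio (-1))) atBot ∧
    Tendsto bconst atTop (nhds 0) ∧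
    Tendsto bconst atBot (nhds 0) := by
  have hneg : ∀ c : ℝ, bconst c = -bconst (-c) := by
    intro c
    rw [bconst_neg]
    ring
  refine ⟨?_, bconst_anti, bconst_tendsto_one, ?_, bconst_tendsto_top, ?_⟩
  · intro x hx y hy hxy
    simp only [Set.mem_Iio] at hx hy
    have h := bconst_anti (a := -y) (b := -x)
      (by simp only [Set.mem_Ioi]; linarith)
      (by simp only [Set.mem_Ioi]; linarith) (by linarith)
    rw [hneg x, hneg y]
    linarith
  · have hmap : Tendsto (fun c : ℝ => -c) (nhdsWithin (-1) (Set.Iio (-1)))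
        (nhdsWithin 1 (Set.Ioi 1)) := by
      apply tendsto_nhdsWithin_of_tendsto_nhds_of_eventually_within
      · have : Tendsto (fun c : ℝ => -c) (nhds (-1:ℝ)) (nhds 1) := by
          have := continuous_neg.tendsto (-1:ℝ)
          simpa using this
        exact this.mono_left nhdsWithin_le_nhds
      · filter_upwards [self_mem_nhdsWithin] with c hc
        simp only [Set.mem_Iio] at hc
        simp only [Set.mem_Ioi]
        linarith
    have h : Tendsto (fun c : ℝ => bconst (-c)) (nhdsWithin (-1) (Set.Iio (-1))) atTop :=
      bconst_tendsto_one.comp hmap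
    have h2 : Tendsto (fun c : ℝ => -(bconst (-c))) (nhdsWithin (-1) (Set.Iio (-1))) atBot :=
      tendsto_neg_atTop_atBot.comp h
    have hfun : bconst = fun c : ℝ => -(bconst (-c)) := funext fun c => hneg c
    rw [hfun]
    exact h2
  · have h : Tendsto (fun c : ℝ => bconst (-c)) atBot (nhds 0) :=
      bconst_tendsto_top.comp tendsto_neg_atBot_atTop
    have h2 : Tendsto (fun c : ℝ => -(bconst (-c))) atBot (nhds 0) := by
      simpa using h.neg
    have hfun : bconst = fun c : ℝ => -(bconst (-c)) := funext fun c => hneg c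
    rw [hfun]
    exact h2
end
end

section
/- Let F̂ : ℝ³ × [0,∞) → ℂ³ be jointly measurable with sup_{t≥0} ess sup_ξ |F̂(ξ,t)| < ∞ and lim_{t→∞} ess sup_ξ |F̂(ξ,t)| = 0. Then lim_{t→∞} ess sup_{ξ∈ℝ³} |ξ|² | ∫₀ᵗ e^{−(t−τ)|ξ|²} P̂(ξ) F̂(ξ,τ) dτ | = 0. -/
open MeasureTheory Filter
open scoped ENNReal

noncomputable section

abbrev E3 : Type := EuclideanSpace ℝ (Fin 3)
abbrev V3 : Type := Fin 3 → ℂ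

/-- The `PM^a` norm (on the Fourier side): `ess sup_ξ |ξ|^a |g(ξ)|`, valued in `ℝ≥0∞`. -/
def PMnorm (a : ℝ) (g : E3 → V3) : ℝ≥0∞ :=
  essSup (fun ξ : E3 => ENNReal.ofReal (‖ξ‖ ^ a * ‖g ξ‖)) volume

/-- The symbol `P̂(ξ)_{jk} = δ_{jk} − ξ_j ξ_k / |ξ|²` of the Leray projector. -/
def LerayP (ξ : E3) : Matrix (Fin 3) (Fin 3) ℂ :=
  fun j k => (if j = k then (1 : ℂ) else 0) - ((ξ j : ℂ) * (ξ k : ℂ)) / ((‖ξ‖ : ℂ) ^ 2)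

/-- The matrix-valued convolution
`Ŵ[v,w](ξ)_{jk} = (2π)^{-3/2} ∫ v_j(ξ−z) w_k(z) dz`
(the Fourier transform of the tensor product `v ⊗ w`). -/
def Wconv (v w : E3 → V3) (ξ : E3) : Matrix (Fin 3) (Fin 3) ℂ :=
  fun j k => (((2 * Real.pi) ^ ((3 : ℝ) / 2))⁻¹ : ℝ) • ∫ z : E3, v (ξ - z) j * w z k

/-- The vector `iξ·Ŵ[v,w](ξ)`, with components `Σ_k iξ_k Ŵ[v,w](ξ)_{jk}`. -/
def ixW (v w : E3 → V3) (ξ : E3) : V3 :=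
  fun j => ∑ k : Fin 3, Complex.I * (ξ k : ℂ) * Wconv v w ξ j k

/-- The Fourier side of the Duhamel force term `∫₀ᵗ S(t−τ) P F(τ) dτ`. -/
def Fterm (F : E3 → ℝ → V3) (ξ : E3) (t : ℝ) : V3 :=
  ∫ τ in (0 : ℝ)..t, Real.exp (-(t - τ) * ‖ξ‖ ^ 2) • (LerayP ξ).mulVec (F ξ τ)

/-- `sup_{t ≥ 0} ‖u(t)‖_{PM^a}`. -/
def supPM (a : ℝ) (u : E3 → ℝ → V3) : ℝ≥0∞ :=
  ⨆ (t : ℝ) (_ : 0 ≤ t), PMnorm a (fun ξ => u ξ t)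

section Helpers

lemma coord_le_norm (ξ : E3) (j : Fin 3) : |ξ j| ≤ ‖ξ‖ := by
  rw [EuclideanSpace.norm_eq, ← Real.sqrt_sq_eq_abs]
  apply Real.sqrt_le_sqrt
  calc ξ j ^ 2 = ‖ξ j‖ ^ 2 := by rw [Real.norm_eq_abs, sq_abs]
    _ ≤ ∑ i : Fin 3, ‖ξ i‖ ^ 2 :=
        Finset.single_le_sum (fun i _ => sq_nonneg ‖ξ i‖) (Finset.mem_univ j)

lemma LerayP_entry (ξ : E3) (j k : Fin 3) : ‖LerayP ξ j k‖ ≤ 2 := by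
  have h1 : ‖(if j = k then (1 : ℂ) else 0)‖ ≤ 1 := by split <;> simp
  have h2 : ‖((ξ j : ℂ) * (ξ k : ℂ)) / ((‖ξ‖ : ℂ) ^ 2)‖ ≤ 1 := by
    rw [norm_div, norm_mul]
    simp only [Complex.norm_real, norm_pow, Real.norm_eq_abs, abs_norm]
    rcases eq_or_lt_of_le (norm_nonneg ξ) with h | h
    · simp [← h]
    · rw [div_le_one (by positivity)]
      calc |ξ j| * |ξ k| ≤ ‖ξ‖ * ‖ξ‖ :=
        mul_le_mul (coord_le_norm ξ j) (coord_le_norm ξ k) (abs_nonneg _) (norm_nonneg _)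
        _ = ‖ξ‖ ^ 2 := (sq ‖ξ‖).symm
  calc ‖LerayP ξ j k‖ ≤ _ + _ := norm_sub_le _ _
    _ ≤ 1 + 1 := add_le_add h1 h2
    _ = 2 := by norm_num

lemma LerayP_mulVec (ξ : E3) (v : V3) : ‖(LerayP ξ).mulVec v‖ ≤ 6 * ‖v‖ := by
  rw [pi_norm_le_iff_of_nonneg (by positivity)]
  intro j
  calc ‖∑ k : Fin 3, LerayP ξ j k * v k‖ ≤ ∑ k : Fin 3, ‖LerayP ξ j k * v k‖ :=
        norm_sum_le _ _
    _ ≤ ∑ _k : Fin 3, 2 * ‖v‖ := by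
        apply Finset.sum_le_sum
        intro k _
        rw [norm_mul]
        exact mul_le_mul (LerayP_entry ξ j k) (norm_le_pi_norm v k) (norm_nonneg _) (by norm_num)
    _ = 6 * ‖v‖ := by simp [Finset.sum_const]; ring

lemma ae_swap_helper {α β : Type*} [MeasureSpace α] [MeasureSpace β]
    [SigmaFinite (volume : Measure α)] [SigmaFinite (volume : Measure β)]
    {P : α → β → Prop} (hP : MeasurableSet {p : α × β | P p.1 p.2})
    (h : ∀ τ : β, ∀ᵐ ξ : α, P ξ τ) : ∀ᵐ ξ : α, ∀ᵐ τ : β, P ξ τ := by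
  rw [Measure.ae_ae_comm hP]
  exact Eventually.of_forall h

lemma exp_integral_bound (x T t : ℝ) (hx : 0 < x) (hT : T ≤ t) :
    ∫ τ in T..t, Real.exp (-(t - τ) * x) ≤ 1 / x := by
  have hd : ∀ τ ∈ Set.uIcc T t, HasDerivAt (fun τ => Real.exp (-(t - τ) * x) / x)
      (Real.exp (-(t - τ) * x)) τ := by
    intro τ _
    have h1 : HasDerivAt (fun τ : ℝ => -(t - τ) * x) x τ := by
      have := ((hasDerivAt_id τ).const_sub t).neg.mul_const x
      simpa using this
    have h2 := (h1.exp).div_const x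
    rw [mul_div_assoc, div_self (ne_of_gt hx), mul_one] at h2
    exact h2
  have hint : IntervalIntegrable (fun τ => Real.exp (-(t - τ) * x)) volume T t := by
    apply Continuous.intervalIntegrable
    exact Real.continuous_exp.comp (((continuous_const.sub continuous_id).neg).mul continuous_const)
  rw [intervalIntegral.integral_eq_sub_of_hasDerivAt hd hint]
  have e1 : Real.exp (-(t - t) * x) = 1 := by norm_num
  rw [e1]
  have : 0 ≤ Real.exp (-(t - T) * x) / x := by positivity
  rw [div_sub_div_same, one_div]
  rw [div_le_iff₀ hx, inv_mul_cancel₀ (ne_of_gt hx)]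
  nlinarith [Real.exp_pos (-(t - T) * x)]

lemma mul_exp_le (x s : ℝ) (hx : 0 ≤ x) (hs : 0 < s) :
    x * Real.exp (-(s * x)) ≤ 1 / s := by
  rw [Real.exp_neg, ← div_eq_mul_inv, div_le_div_iff₀ (Real.exp_pos _) hs]
  calc x * s ≤ s * x + 1 := by nlinarith
    _ ≤ Real.exp (s * x) := by
        have := Real.add_one_le_exp (s * x)
        linarith
    _ = 1 * Real.exp (s * x) := (one_mul _).symm

lemma key_est (F : E3 → ℝ → V3) (ξ : E3) (M ε T t : ℝ)
    (hM : 0 ≤ M) (hε : 0 ≤ ε) (hT : 0 ≤ T) (ht : T < t)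
    (hFξ : Measurable (fun τ => F ξ τ))
    (hA : ∀ᵐ τ : ℝ, 0 ≤ τ → ‖F ξ τ‖ ≤ M)
    (hB : ∀ᵐ τ : ℝ, T ≤ τ → ‖F ξ τ‖ ≤ ε) :
    ‖ξ‖ ^ 2 * ‖Fterm F ξ t‖ ≤ 6 * M * T / (t - T) + 6 * ε := by
  set x := ‖ξ‖ ^ 2 with hxdef
  have hx0 : 0 ≤ x := sq_nonneg _
  rcases eq_or_lt_of_le hx0 with hx | hx
  · rw [← hx, zero_mul]
    have h1 : (0:ℝ) ≤ 6 * M * T / (t - T) := div_nonneg (by positivity) (by linarith)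
    linarith
  set g : ℝ → V3 := fun τ => Real.exp (-(t - τ) * ‖ξ‖ ^ 2) • (LerayP ξ).mulVec (F ξ τ)
    with hgdef
  have hexp : Measurable (fun τ : ℝ => Real.exp (-(t - τ) * ‖ξ‖ ^ 2)) := by
    apply Real.measurable_exp.comp
    exact (((measurable_const.sub measurable_id).neg).mul measurable_const)
  have hmul : Measurable (fun τ => (LerayP ξ).mulVec (F ξ τ)) := by
    apply measurable_pi_lambda
    intro j
    simp only [Matrix.mulVec, dotProduct]
    exact Finset.measurable_sum _ fun k _ =>
      measurable_const.mul ((measurable_pi_apply k).comp hFξ)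
  have hg : Measurable g := hexp.smul hmul
  have hbound1 : ∀ᵐ τ : ℝ, τ ∈ Set.uIoc (0:ℝ) T → ‖g τ‖ ≤
      Real.exp (-(t - T) * x) * (6 * M) := by
    filter_upwards [hA] with τ h1 h2
    rw [Set.uIoc_of_le hT] at h2
    have hτT : τ ≤ T := h2.2
    have hFle : ‖F ξ τ‖ ≤ M := h1 h2.1.le
    have : ‖g τ‖ ≤ Real.exp (-(t - τ) * x) * (6 * M) := by
      rw [hgdef]
      simp only [norm_smul, Real.norm_eq_abs, Real.abs_exp]
      exact mul_le_mul le_rfl ((LerayP_mulVec ξ _).trans (by nlinarith))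
        (norm_nonneg _) (Real.exp_pos _).le
    refine this.trans ?_
    apply mul_le_mul_of_nonneg_right _ (by positivity)
    apply Real.exp_le_exp.mpr
    nlinarith
  have hbound2 : ∀ᵐ τ ∂volume.restrict (Set.uIoc T t), ‖g τ‖ ≤
      Real.exp (-(t - τ) * x) * (6 * ε) := by
    filter_upwards [ae_restrict_of_ae hB, ae_restrict_mem measurableSet_uIoc] with τ h1 h2
    rw [Set.uIoc_of_le ht.le] at h2
    have hFle : ‖F ξ τ‖ ≤ ε := h1 h2.1.le
    rw [hgdef]
    simp only [norm_smul, Real.norm_eq_abs, Real.abs_exp]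
    exact mul_le_mul le_rfl ((LerayP_mulVec ξ _).trans (by nlinarith))
      (norm_nonneg _) (Real.exp_pos _).le
  have hcont : ∀ c : ℝ, IntervalIntegrable (fun τ => Real.exp (-(t - τ) * x) * c) volume 0 t ∧
      IntervalIntegrable (fun τ => Real.exp (-(t - τ) * x) * c) volume 0 T ∧
      IntervalIntegrable (fun τ => Real.exp (-(t - τ) * x) * c) volume T t := by
    intro c
    have hc : Continuous (fun τ : ℝ => Real.exp (-(t - τ) * x) * c) :=
      (Real.continuous_exp.comp
        (((continuous_const.sub continuous_id).neg).mul continuous_const)).mul continuous_const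
    exact ⟨hc.intervalIntegrable _ _, hc.intervalIntegrable _ _, hc.intervalIntegrable _ _⟩
  have hi : ∀ a b : ℝ, 0 ≤ a → a ≤ b → b ≤ t → IntervalIntegrable g volume a b := by
    intro a b ha hab hbt
    rw [intervalIntegrable_iff]
    apply Integrable.mono' (g := fun _ => 6 * M)
      (integrableOn_const measure_Ioc_lt_top.ne)
      (hg.aestronglyMeasurable.restrict)
    filter_upwards [ae_restrict_of_ae hA, ae_restrict_mem measurableSet_uIoc] with τ h1 h2
    rw [min_eq_left hab, max_eq_right hab] at h2
    have hτ0 : 0 ≤ τ := le_trans ha h2.1.le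
    have hFle : ‖F ξ τ‖ ≤ M := h1 hτ0
    have hexp1 : Real.exp (-(t - τ) * ‖ξ‖ ^ 2) ≤ 1 := by
      apply Real.exp_le_one_iff.mpr
      have : τ ≤ t := le_trans h2.2 hbt
      nlinarith [sq_nonneg ‖ξ‖]
    calc ‖g τ‖ = Real.exp (-(t - τ) * ‖ξ‖ ^ 2) * ‖(LerayP ξ).mulVec (F ξ τ)‖ := by
          rw [hgdef]; simp [norm_smul, Real.abs_exp]
      _ ≤ 1 * (6 * M) := mul_le_mul hexp1 ((LerayP_mulVec ξ _).trans (by nlinarith))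
          (norm_nonneg _) zero_le_one
      _ = 6 * M := one_mul _
  have hi1 : IntervalIntegrable g volume 0 T := hi 0 T le_rfl hT ht.le
  have hi2 : IntervalIntegrable g volume T t := hi T t hT ht.le le_rfl
  have hsplit : Fterm F ξ t = (∫ τ in (0:ℝ)..T, g τ) + ∫ τ in T..t, g τ :=
    (intervalIntegral.integral_add_adjacent_intervals hi1 hi2).symm
  have hI1 : ‖∫ τ in (0:ℝ)..T, g τ‖ ≤ Real.exp (-(t - T) * x) * (6 * M) * T := by
    have := intervalIntegral.norm_integral_le_of_norm_le_const_ae hbound1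
    calc ‖∫ τ in (0:ℝ)..T, g τ‖ ≤ Real.exp (-(t - T) * x) * (6 * M) * |T - 0| := this
      _ = Real.exp (-(t - T) * x) * (6 * M) * T := by rw [sub_zero, abs_of_nonneg hT]
  have hI2 : ‖∫ τ in T..t, g τ‖ ≤ 6 * ε / x := by
    have h1 := intervalIntegral.norm_integral_le_abs_of_norm_le hbound2 ((hcont (6 * ε)).2.2)
    refine h1.trans ?_
    have hnn : 0 ≤ ∫ τ in T..t, Real.exp (-(t - τ) * x) * (6 * ε) := by
      apply intervalIntegral.integral_nonneg ht.le
      intro u _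
      positivity
    rw [abs_of_nonneg hnn]
    have : (∫ τ in T..t, Real.exp (-(t - τ) * x) * (6 * ε)) =
        (∫ τ in T..t, Real.exp (-(t - τ) * x)) * (6 * ε) :=
      intervalIntegral.integral_mul_const _ _
    rw [this]
    calc (∫ τ in T..t, Real.exp (-(t - τ) * x)) * (6 * ε) ≤ (1 / x) * (6 * ε) := by
          apply mul_le_mul_of_nonneg_right (exp_integral_bound x T t hx ht.le) (by positivity)
      _ = 6 * ε / x := by ring
  have hnorm : ‖Fterm F ξ t‖ ≤ Real.exp (-(t - T) * x) * (6 * M) * T + 6 * ε / x := by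
    rw [hsplit]
    exact (norm_add_le _ _).trans (add_le_add hI1 hI2)
  have hxe : x * Real.exp (-(t - T) * x) ≤ 1 / (t - T) := by
    have := mul_exp_le x (t - T) hx0 (by linarith)
    calc x * Real.exp (-(t - T) * x) = x * Real.exp (-((t - T) * x)) := by rw [neg_mul]
      _ ≤ 1 / (t - T) := this
  calc ‖ξ‖ ^ 2 * ‖Fterm F ξ t‖
      ≤ x * (Real.exp (-(t - T) * x) * (6 * M) * T + 6 * ε / x) :=
        mul_le_mul_of_nonneg_left hnorm hx0
    _ = (x * Real.exp (-(t - T) * x)) * (6 * M * T) + 6 * ε := by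
        field_simp
    _ ≤ (1 / (t - T)) * (6 * M * T) + 6 * ε := by
        refine add_le_add ?_ le_rfl
        apply mul_le_mul_of_nonneg_right hxe (by positivity)
    _ = 6 * M * T / (t - T) + 6 * ε := by ring

end Helpers

/-- **Decay of the Duhamel force term:** if `F ∈ C_w([0,∞), PM)` is bounded and
`‖F(t)‖_{PM} → 0` as `t → ∞`, then `‖∫₀ᵗ S(t−τ)PF(τ)dτ‖_{PM²} → 0` as `t → ∞`. -/
theorem Fterm_decay (F : E3 → ℝ → V3)
    (hFm : Measurable (fun p : E3 × ℝ => F p.1 p.2))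
    (hFbdd : supPM 0 F ≠ ⊤)
    (hFdec : Tendsto (fun t : ℝ => PMnorm 0 (fun ξ => F ξ t)) atTop (nhds 0)) :
    Tendsto (fun t : ℝ => PMnorm 2 (fun ξ => Fterm F ξ t)) atTop (nhds 0) := by
  rw [ENNReal.tendsto_nhds_zero]
  intro ε'' hε''
  obtain ⟨δ, hδpos, hδle⟩ : ∃ δ : ℝ, 0 < δ ∧ ENNReal.ofReal δ ≤ ε'' := by
    rcases eq_or_ne ε'' ⊤ with rfl | hne
    · exact ⟨1, one_pos, le_top⟩
    · exact ⟨ε''.toReal, ENNReal.toReal_pos hε''.ne' hne,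
        (ENNReal.ofReal_toReal hne).le⟩
  set M := (supPM 0 F).toReal with hMdef
  have hM : 0 ≤ M := ENNReal.toReal_nonneg
  have hsup : supPM 0 F = ENNReal.ofReal M := (ENNReal.ofReal_toReal hFbdd).symm
  set ε := δ / 12 with hεdef
  have hε : 0 < ε := by positivity
  obtain ⟨T₀, hT₀⟩ := eventually_atTop.mp
    (ENNReal.tendsto_nhds_zero.mp hFdec (ENNReal.ofReal ε) (by
      simpa [ENNReal.ofReal_pos] using hε))
  set T := max T₀ 0 with hTdef
  have hT0 : 0 ≤ T := le_max_right _ _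
  -- a.e. in ξ: uniform-in-time bounds
  have haeM : ∀ᵐ ξ : E3, ∀ᵐ τ : ℝ, 0 ≤ τ → ‖F ξ τ‖ ≤ M := by
    apply ae_swap_helper
    · have h1 : MeasurableSet {p : E3 × ℝ | 0 ≤ p.2} :=
        measurable_snd measurableSet_Ici
      have h2 : MeasurableSet {p : E3 × ℝ | ‖F p.1 p.2‖ ≤ M} :=
        measurableSet_le hFm.norm measurable_const
      have he : {p : E3 × ℝ | 0 ≤ p.2 → ‖F p.1 p.2‖ ≤ M} =
          {p : E3 × ℝ | 0 ≤ p.2}ᶜ ∪ {p : E3 × ℝ | ‖F p.1 p.2‖ ≤ M} := by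
        ext p; simp [imp_iff_not_or]
      rw [he]
      exact h1.compl.union h2
    · intro τ
      by_cases hτ : 0 ≤ τ
      · have h1 : PMnorm 0 (fun ξ => F ξ τ) ≤ supPM 0 F :=
          le_iSup_of_le τ (le_iSup_of_le hτ le_rfl)
        have h2 := ae_le_essSup
          (μ := (volume : Measure E3))
          (f := fun ξ : E3 => ENNReal.ofReal (‖ξ‖ ^ (0:ℝ) * ‖F ξ τ‖))
        filter_upwards [h2] with ξ hξ _
        have h3 : ENNReal.ofReal ‖F ξ τ‖ ≤ ENNReal.ofReal M := by
          have e : ‖ξ‖ ^ (0:ℝ) * ‖F ξ τ‖ = ‖F ξ τ‖ := by rw [Real.rpow_zero, one_mul]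
          calc ENNReal.ofReal ‖F ξ τ‖
              = ENNReal.ofReal (‖ξ‖ ^ (0:ℝ) * ‖F ξ τ‖) := by rw [e]
            _ ≤ PMnorm 0 (fun ξ => F ξ τ) := hξ
            _ ≤ supPM 0 F := h1
            _ = ENNReal.ofReal M := hsup
        exact (ENNReal.ofReal_le_ofReal_iff hM).mp h3
      · filter_upwards with ξ h
        exact absurd h hτ
  have haeε : ∀ᵐ ξ : E3, ∀ᵐ τ : ℝ, T ≤ τ → ‖F ξ τ‖ ≤ ε := by
    apply ae_swap_helper
    · have h1 : MeasurableSet {p : E3 × ℝ | T ≤ p.2} :=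
        measurable_snd measurableSet_Ici
      have h2 : MeasurableSet {p : E3 × ℝ | ‖F p.1 p.2‖ ≤ ε} :=
        measurableSet_le hFm.norm measurable_const
      have he : {p : E3 × ℝ | T ≤ p.2 → ‖F p.1 p.2‖ ≤ ε} =
          {p : E3 × ℝ | T ≤ p.2}ᶜ ∪ {p : E3 × ℝ | ‖F p.1 p.2‖ ≤ ε} := by
        ext p; simp [imp_iff_not_or]
      rw [he]
      exact h1.compl.union h2
    · intro τ
      by_cases hτ : T ≤ τ
      · have h1 : PMnorm 0 (fun ξ => F ξ τ) ≤ ENNReal.ofReal ε :=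
          hT₀ τ (le_trans (le_max_left _ _) hτ)
        have h2 := ae_le_essSup
          (μ := (volume : Measure E3))
          (f := fun ξ : E3 => ENNReal.ofReal (‖ξ‖ ^ (0:ℝ) * ‖F ξ τ‖))
        filter_upwards [h2] with ξ hξ _
        have h3 : ENNReal.ofReal ‖F ξ τ‖ ≤ ENNReal.ofReal ε := by
          have e : ‖ξ‖ ^ (0:ℝ) * ‖F ξ τ‖ = ‖F ξ τ‖ := by rw [Real.rpow_zero, one_mul]
          calc ENNReal.ofReal ‖F ξ τ‖
              = ENNReal.ofReal (‖ξ‖ ^ (0:ℝ) * ‖F ξ τ‖) := by rw [e]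
            _ ≤ PMnorm 0 (fun ξ => F ξ τ) := hξ
            _ ≤ ENNReal.ofReal ε := h1
        exact (ENNReal.ofReal_le_ofReal_iff hε.le).mp h3
      · filter_upwards with ξ h
        exact absurd h hτ
  -- the eventual bound
  filter_upwards [eventually_ge_atTop (T + (12 * M * T + 1) / δ)] with t ht
  have hstep : (12 * M * T + 1) / δ ≤ t - T := by linarith
  have hspos : 0 < t - T :=
    lt_of_lt_of_le (by positivity) hstep
  have hbound : PMnorm 2 (fun ξ => Fterm F ξ t) ≤
      ENNReal.ofReal (6 * M * T / (t - T) + 6 * ε) := by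
    apply essSup_le_of_ae_le
    filter_upwards [haeM, haeε] with ξ h1 h2
    apply ENNReal.ofReal_le_ofReal
    rw [Real.rpow_two]
    exact key_est F ξ M ε T t hM hε.le hT0 (by linarith)
      (hFm.comp (measurable_prodMk_left)) h1 h2
    isBoundedDefault
  refine hbound.trans (le_trans ?_ hδle)
  apply ENNReal.ofReal_le_ofReal
  have hstep2 : 12 * M * T + 1 ≤ δ * (t - T) := by
    rw [div_le_iff₀ hδpos] at hstep
    linarith
  have hMT : 6 * M * T / (t - T) ≤ δ / 2 := by
    rw [div_le_iff₀ hspos]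
    nlinarith
  have : 6 * ε ≤ δ / 2 := by rw [hεdef]; linarith
  linarith
end
end
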